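/- arXiv:1907.04038 — 6 statements merged into one kernel-verified Lean document; each statement's English description precedes it below -/
import Mathlib

section
/- For integers 0 ≤ j ≤ l and a real number λ > 0, the identity ∑_{i=j}^{l} ( (j+1)_{i-j} · C(l,i) ) / ( (λ+2j)_{2i-2j} · (λ+2i+1)_{l-i} ) = C(l,j) / (λ+2j)_{l-j} holds, where (x)_p denotes the Pochhammer symbol. -/
open Finset

/-- Pochhammer (rising factorial) symbol `(x)_p = x (x+1) ⋯ (x+p-1)`. -/
noncomputable def poch (x : ℝ) (p : ℕ) : ℝ := ∏ i ∈ Finset.range p, (x + i)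

lemma poch_zero (x : ℝ) : poch x 0 = 1 := by simp [poch]

lemma poch_pos {x : ℝ} (hx : 0 < x) (p : ℕ) : 0 < poch x p :=
  Finset.prod_pos fun i _ => by positivity

lemma poch_succ_right (x : ℝ) (p : ℕ) : poch x (p + 1) = poch x p * (x + p) :=
  Finset.prod_range_succ _ _

lemma poch_succ_left (x : ℝ) (p : ℕ) : poch x (p + 1) = x * poch (x + 1) p := by
  unfold poch
  have h : ∀ i ∈ Finset.range p, x + ((i + 1 : ℕ) : ℝ) = (x + 1) + i := fun i _ => by
    push_cast; ring
  rw [Finset.prod_range_succ', Finset.prod_congr rfl h]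
  simp [mul_comm]

lemma aux (a b m Q s u : ℝ) (hm : m ≠ 0) (hm1 : m + 1 ≠ 0) (hQ : Q ≠ 0) (hs : s ≠ 0)
    (h : b * u = a * (s - m)) :
    a / (Q * s) + u / (m * (m + 1)) * (b / (Q * s / (m + 1))) = a / (m * Q) := by
  rw [div_div_eq_mul_div]
  field_simp
  ring_nf
  linear_combination h

theorem stmt1 (lam : ℝ) (hlam : 0 < lam) (j l : ℕ) (hjl : j ≤ l) :
    ∑ i ∈ Finset.Icc j l,
        (poch ((j : ℝ) + 1) (i - j) * (l.choose i : ℝ)) /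
          (poch (lam + 2 * j) (2 * i - 2 * j) * poch (lam + 2 * i + 1) (l - i)) =
      (l.choose j : ℝ) / poch (lam + 2 * j) (l - j) := by
  obtain ⟨n, rfl⟩ : ∃ n, l = j + n := ⟨l - j, (Nat.add_sub_cancel' hjl).symm⟩
  clear hjl
  induction n generalizing j with
  | zero => simp [poch_zero]
  | succ n IH =>
    have hins : Finset.Icc j (j + (n + 1)) = insert j (Finset.Icc (j + 1) (j + (n + 1))) := by
      ext m; simp [Finset.mem_Icc]; omega
    rw [hins, Finset.sum_insert (by simp)]
    have hstep : ∀ i ∈ Finset.Icc (j + 1) (j + (n + 1)),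
        (poch ((j : ℝ) + 1) (i - j) * ((j + (n + 1)).choose i : ℝ)) /
          (poch (lam + 2 * j) (2 * i - 2 * j) * poch (lam + 2 * i + 1) (j + (n + 1) - i)) =
        (((j : ℝ) + 1) / ((lam + 2 * j) * (lam + 2 * j + 1))) *
        ((poch (((j + 1 : ℕ) : ℝ) + 1) (i - (j + 1)) * ((j + (n + 1)).choose i : ℝ)) /
          (poch (lam + 2 * (j + 1 : ℕ)) (2 * i - 2 * (j + 1)) *
            poch (lam + 2 * i + 1) (j + (n + 1) - i))) := by
      intro i hi
      simp only [Finset.mem_Icc] at hi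
      have h1 : i - j = (i - (j + 1)) + 1 := by omega
      have h2 : 2 * i - 2 * j = (2 * i - 2 * (j + 1)) + 1 + 1 := by omega
      rw [h1, h2, poch_succ_left, poch_succ_left (lam + 2 * j),
        poch_succ_left (lam + 2 * j + 1)]
      have e1 : ((j : ℝ) + 1) + 1 = ((j + 1 : ℕ) : ℝ) + 1 := by push_cast; ring
      have e2 : lam + 2 * (j : ℝ) + 1 + 1 = lam + 2 * ((j + 1 : ℕ) : ℝ) := by push_cast; ring
      rw [e1, e2]
      rw [div_mul_div_comm]
      ring_nf
    rw [Finset.sum_congr rfl hstep, ← Finset.mul_sum]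
    have e3 : j + 1 + n = j + (n + 1) := by omega
    have key := IH (j + 1)
    rw [e3] at key
    rw [key]
    have hA : j + (n + 1) - j = n + 1 := by omega
    have hB : j + (n + 1) - (j + 1) = n := by omega
    rw [hA, hB]
    simp only [Nat.sub_self, poch_zero, one_mul, mul_one]
    have hchoose : ((j + (n + 1)).choose (j + 1) : ℝ) * (j + 1) =
        ((j + (n + 1)).choose j : ℝ) * (n + 1) := by
      have := Nat.choose_succ_right_eq (j + (n + 1)) j
      have h' : j + (n + 1) - j = n + 1 := by omega
      rw [h'] at this
      exact_mod_cast congrArg (Nat.cast : ℕ → ℝ) this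
    set Q := poch (lam + 2 * (j : ℝ) + 1) n with hQ
    have hQpos : 0 < Q := poch_pos (by positivity) n
    have hPQ : (lam + 2 * (j : ℝ) + 1) * poch (lam + 2 * (j : ℝ) + 1 + 1) n =
        Q * (lam + 2 * j + 1 + n) := by
      rw [← poch_succ_left, poch_succ_right]
    have e4 : lam + 2 * ((j + 1 : ℕ) : ℝ) = lam + 2 * (j : ℝ) + 1 + 1 := by push_cast; ring
    rw [e4]
    have hP : poch (lam + 2 * (j : ℝ) + 1 + 1) n =
        Q * (lam + 2 * j + 1 + n) / (lam + 2 * (j : ℝ) + 1) := by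
      rw [eq_div_iff (by positivity)]; linarith [hPQ]
    rw [hP, poch_succ_left (lam + 2 * (j : ℝ)), poch_succ_right (lam + 2 * (j : ℝ) + 1)]
    exact aux _ _ _ _ _ _ (by positivity) (by positivity) (ne_of_gt hQpos) (by positivity)
      (by linear_combination hchoose)
end

section
/- For real λ > 0 and integers 0 ≤ k < l, the identity 1/(λ)_{l+k+1} − 1/( (λ)_{2k+2} · (λ+2k+3)_{l−k−1} ) = (l−k−1)/(λ)_{l+k+2} holds, where (x)_p is the Pochhammer symbol. -/
open Finset

lemma poch_add (x : ℝ) (a b : ℕ) : poch x (a + b) = poch x a * poch (x + a) b := by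
  unfold poch
  rw [Finset.prod_range_add]
  congr 1
  apply Finset.prod_congr rfl
  intro i _
  push_cast
  ring

lemma poch_one (x : ℝ) : poch x 1 = x := by simp [poch]

theorem stmt5 (lam : ℝ) (hlam : 0 < lam) (k l : ℕ) (hkl : k < l) :
    1 / poch lam (l + k + 1) -
        1 / (poch lam (2 * k + 2) * poch (lam + 2 * k + 3) (l - k - 1)) =
      ((l : ℝ) - (k : ℝ) - 1) / poch lam (l + k + 2) := by
  obtain ⟨m, rfl⟩ : ∃ m, l = k + 1 + m := ⟨l - k - 1, by omega⟩
  have h1 : k + 1 + m + k + 1 = 2 * k + 2 + m := by ring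
  have h2 : k + 1 + m + k + 2 = (2 * k + 2 + m) + 1 := by ring
  have h3 : k + 1 + m - k - 1 = m := by omega
  rw [h1, h2, h3]
  set P := poch lam (2 * k + 2 + m + 1) with hPdef
  have hP : 0 < P := poch_pos hlam _
  have hA : 0 < poch lam (2 * k + 2 + m) := poch_pos hlam _
  have hX : 0 < poch lam (2 * k + 2) := poch_pos hlam _
  have hB : 0 < poch (lam + 2 * k + 3) m := poch_pos (by positivity) m
  have eA : P = poch lam (2 * k + 2 + m) * (lam + (2 * k + 2 + m : ℕ)) := by
    rw [hPdef, poch_add lam (2 * k + 2 + m) 1, poch_one]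
  have eX : P = poch lam (2 * k + 2) *
      ((lam + (2 * k + 2 : ℕ)) * poch (lam + 2 * k + 3) m) := by
    rw [hPdef, show 2 * k + 2 + m + 1 = (2 * k + 2) + (1 + m) from by ring,
      poch_add lam (2 * k + 2) (1 + m), poch_add (lam + (2 * k + 2 : ℕ)) 1 m, poch_one]
    have : lam + (2 * k + 2 : ℕ) + (1 : ℕ) = lam + 2 * k + 3 := by push_cast; ring
    rw [this]
  have r1 : 1 / poch lam (2 * k + 2 + m) = (lam + (2 * k + 2 + m : ℕ)) / P := by
    rw [eA]; field_simp
  have r2 : 1 / (poch lam (2 * k + 2) * poch (lam + 2 * k + 3) m)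
      = (lam + (2 * k + 2 : ℕ)) / P := by
    rw [eX]
    rw [div_eq_div_iff (by positivity) (by positivity)]
    ring
  rw [r1, r2, div_sub_div_same]
  congr 1
  push_cast
  ring
end

section
/- Let T be a contraction on a Hilbert space H and φ(z) = β(z−α)/(1−ᾱz) a Möbius map (|α|<1, |β|=1). With c(φ,T) = s(β)√(1−|α|²)(I−ᾱT)^{-1}, one has I − φ(T)φ(T)* = c(φ,T)(I − TT*)c(φ,T)*, where φ(T) = β(T−αI)(I−ᾱT)^{-1}. -/
open ContinuousLinearMap

variable {H : Type*} [NormedAddCommGroup H] [InnerProductSpace ℂ H] [CompleteSpace H]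

/-- `φ(T) = β (T − αI)(I − ᾱT)⁻¹` for a Möbius map `φ(z) = β(z−α)/(1−ᾱz)`. -/
noncomputable def phiT (T : H →L[ℂ] H) (α β : ℂ) : H →L[ℂ] H :=
  β • ((T - α • (1 : H →L[ℂ] H)) * Ring.inverse (1 - ((starRingEnd ℂ) α) • T))

/-- `c(φ,T) = s(β) √(1−|α|²) (I − ᾱT)⁻¹`, a square root of `φ'` evaluated at `T`. -/
noncomputable def cT (T : H →L[ℂ] H) (α s : ℂ) : H →L[ℂ] H :=
  (s * ((Real.sqrt (1 - ‖α‖ ^ 2) : ℝ) : ℂ)) •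
    Ring.inverse (1 - ((starRingEnd ℂ) α) • T)

theorem stmt11 (T : H →L[ℂ] H) (hT : ‖T‖ ≤ 1) (α β s : ℂ)
    (hα : ‖α‖ < 1) (hβ : ‖β‖ = 1) (hs : s ^ 2 = β) :
    1 - phiT T α β * adjoint (phiT T α β) =
      cT T α s * ((1 - T * adjoint T) * adjoint (cT T α s)) := by
  have hαT : ‖(starRingEnd ℂ) α • T‖ < 1 := by
    have h1 := norm_smul_le ((starRingEnd ℂ) α) T
    have h2 : ‖(starRingEnd ℂ) α‖ = ‖α‖ := by
      simp
    nlinarith [norm_nonneg T, norm_nonneg α]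
  set u : (H →L[ℂ] H)ˣ := Units.oneSub _ hαT with hu
  have hAval : (u : H →L[ℂ] H) = 1 - (starRingEnd ℂ) α • T := rfl
  set A : H →L[ℂ] H := 1 - (starRingEnd ℂ) α • T with hA
  set R : H →L[ℂ] H := ((u⁻¹ : (H →L[ℂ] H)ˣ) : H →L[ℂ] H) with hRdef
  have hRinv : Ring.inverse A = R := by
    rw [← hAval, Ring.inverse_unit]
  have hAR : A * R = 1 := by rw [← hAval, hRdef]; exact u.mul_inv
  have hRA : R * A = 1 := by rw [← hAval, hRdef]; exact u.inv_mul
  -- A commutes with T - α•1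
  have hcomm : A * (T - α • 1) = (T - α • 1) * A := by
    simp only [hA, sub_mul, mul_sub, one_mul, mul_one, smul_mul_assoc, mul_smul_comm]
    module
  -- star facts
  have hsAR : star R * star A = 1 := by rw [← star_mul, hAR, star_one]
  have hsRA : star A * star R = 1 := by rw [← star_mul, hRA, star_one]
  -- reduction lemma
  have key : ∀ X Y : H →L[ℂ] H,
      A * X * star A = A * Y * star A → X = Y := by
    intro X Y h
    have h2 := congrArg (fun Z => R * Z * star R) h
    calc X = (R * A) * X * (star A * star R) := by rw [hRA, hsRA, one_mul, mul_one]
    _ = R * (A * X * star A) * star R := by noncomm_ring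
    _ = R * (A * Y * star A) * star R := by rw [h]
    _ = (R * A) * Y * (star A * star R) := by noncomm_ring
    _ = Y := by rw [hRA, hsRA, one_mul, mul_one]
  apply key
  -- compute A * φ
  have hAφ : A * phiT T α β = β • (T - α • 1) := by
    rw [phiT, ← hA, hRinv, mul_smul_comm, ← mul_assoc, hcomm, mul_assoc, hAR, mul_one]
  -- compute A * cT
  have hAc : A * cT T α s =
      (s * ((Real.sqrt (1 - ‖α‖ ^ 2) : ℝ) : ℂ)) • 1 := by
    rw [cT, ← hA, hRinv, mul_smul_comm, hAR]
  set k : ℂ := s * ((Real.sqrt (1 - ‖α‖ ^ 2) : ℝ) : ℂ) with hk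
  -- LHS
  have hL : A * (1 - phiT T α β * adjoint (phiT T α β)) * star A =
      A * star A - (T - α • 1) * star (T - α • 1) := by
    have h1 : A * (phiT T α β * adjoint (phiT T α β)) * star A
        = (A * phiT T α β) * star (A * phiT T α β) := by
      rw [← star_eq_adjoint]
      noncomm_ring [star_mul]
    rw [mul_sub, sub_mul, mul_one, h1, hAφ, star_smul, smul_mul_assoc,
      mul_smul_comm, smul_smul]
    have hββ : β * star β = 1 := by
      have := Complex.mul_conj β
      rw [Complex.star_def, this, Complex.normSq_eq_norm_sq, hβ]
      norm_num
    rw [hββ, one_smul]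
  have hRt : A * (cT T α s * ((1 - T * adjoint T) * adjoint (cT T α s))) * star A =
      (k * star k) • (1 - T * adjoint T) := by
    have : A * (cT T α s * ((1 - T * adjoint T) * adjoint (cT T α s))) * star A
        = (A * cT T α s) * (1 - T * adjoint T) * star (A * cT T α s) := by
      rw [← star_eq_adjoint]
      noncomm_ring [star_mul]
    rw [this, hAc]
    simp only [star_smul, star_one, smul_mul_assoc, one_mul, mul_smul_comm, mul_one,
      smul_smul]
    rw [mul_comm (star k) k]
  rw [hL, hRt]
  -- scalar computations
  have hss : s * star s = 1 := by
    have h1 : ‖s‖ ^ 2 = 1 := by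
      have := congrArg norm hs
      rwa [norm_pow, hβ] at this
    rw [Complex.star_def, Complex.mul_conj, Complex.normSq_eq_norm_sq, h1]
    norm_num
  have hsq : (1 : ℝ) - ‖α‖ ^ 2 ≥ 0 := by nlinarith [norm_nonneg α]
  have hkk : k * star k = 1 - (‖α‖ : ℂ) ^ 2 := by
    rw [hk, star_mul']
    have : star (((Real.sqrt (1 - ‖α‖ ^ 2) : ℝ) : ℂ))
        = ((Real.sqrt (1 - ‖α‖ ^ 2) : ℝ) : ℂ) := by
      rw [Complex.star_def, Complex.conj_ofReal]
    rw [this]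
    have hr : ((Real.sqrt (1 - ‖α‖ ^ 2) : ℝ) : ℂ) *
        ((Real.sqrt (1 - ‖α‖ ^ 2) : ℝ) : ℂ) = 1 - (‖α‖ : ℂ) ^ 2 := by
      rw [← Complex.ofReal_mul, Real.mul_self_sqrt hsq]
      push_cast
      ring
    calc s * ((Real.sqrt (1 - ‖α‖ ^ 2) : ℝ) : ℂ) *
        (star s * ((Real.sqrt (1 - ‖α‖ ^ 2) : ℝ) : ℂ))
        = (s * star s) * (((Real.sqrt (1 - ‖α‖ ^ 2) : ℝ) : ℂ) *
          ((Real.sqrt (1 - ‖α‖ ^ 2) : ℝ) : ℂ)) := by ring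
    _ = 1 - (‖α‖ : ℂ) ^ 2 := by rw [hss, hr, one_mul]
  rw [hkk]
  -- final expansion
  rw [← star_eq_adjoint, hA]
  have hαα : (starRingEnd ℂ) α * α = (‖α‖ : ℂ) ^ 2 := by
    rw [mul_comm, Complex.mul_conj, Complex.normSq_eq_norm_sq]
    push_cast; ring
  simp only [star_sub, star_smul, star_one, Complex.star_def, Complex.conj_conj,
    RingHom.id_apply]
  simp only [mul_sub, sub_mul, smul_mul_assoc, mul_smul_comm, smul_smul, smul_sub,
    one_mul, mul_one]
  have hαα' : α * (starRingEnd ℂ) α = (‖α‖ : ℂ) ^ 2 := by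
    rw [mul_comm]; exact hαα
  rw [hαα', hαα]
  module
end

section
/- Let φ₁, φ₂ ∈ Möb be given by φᵢ(z) = βᵢ(z−αᵢ)/(1−ᾱᵢz) with |αᵢ|<1, |βᵢ|=1, and let φ₁φ₂ have the form φ(z) = β(z−α)/(1−ᾱz). With s : 𝕋 → 𝕋 a fixed square-root function, the multiplier m₀(φ₁,φ₂) := c(φ₂^{-1}φ₁^{-1},z)/(c(φ₂^{-1},φ₁^{-1}(z))·c(φ₁^{-1},z)) equals s(β̄)/(s(β̄₁)·s(β̄₂)) · (1 + α₁ᾱ₂β̄₂)/|1 + α₁ᾱ₂β̄₂|. -/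
/-- The Möbius map `z ↦ β (z − α)/(1 − ᾱ z)` with parameters `α ∈ 𝔻`, `β ∈ 𝕋`. -/
noncomputable def mob (α β z : ℂ) : ℂ := β * (z - α) / (1 - (starRingEnd ℂ) α * z)

/-- `c(φ,z) = s(β) √(1−|α|²)/(1 − ᾱ z)` for the Möbius map with parameters `(α, β)`. -/
noncomputable def cfun (s : ℂ → ℂ) (α β z : ℂ) : ℂ :=
  s β * ((Real.sqrt (1 - ‖α‖ ^ 2) : ℝ) : ℂ) / (1 - (starRingEnd ℂ) α * z)

lemma L1 (a z : ℂ) (ha : ‖a‖ < 1) (hz : ‖z‖ < 1) :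
    (1 : ℂ) - (starRingEnd ℂ) a * z ≠ 0 := by
  intro h
  have h1 : (starRingEnd ℂ) a * z = 1 := by linear_combination -h
  have h2 := congrArg (‖·‖) h1
  simp [map_mul, Complex.norm_conj] at h2
  nlinarith [norm_nonneg a, norm_nonneg z]

lemma L2 (a b z : ℂ) (ha : ‖a‖ < 1) (hb : ‖b‖ = 1)
    (hz : ‖z‖ < 1) : ‖mob a b z‖ < 1 := by
  have hd := L1 a z ha hz
  have key : Complex.normSq (1 - (starRingEnd ℂ) a * z) - Complex.normSq (z - a)
      = (1 - Complex.normSq a) * (1 - Complex.normSq z) := by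
    have hc : (((Complex.normSq (1 - (starRingEnd ℂ) a * z) : ℝ) : ℂ)
        - ((Complex.normSq (z - a) : ℝ) : ℂ))
        = (1 - ((Complex.normSq a : ℝ) : ℂ)) * (1 - ((Complex.normSq z : ℝ) : ℂ)) := by
      rw [← Complex.mul_conj, ← Complex.mul_conj, ← Complex.mul_conj, ← Complex.mul_conj]
      simp only [map_sub, map_mul, map_one, Complex.conj_conj]
      ring
    exact_mod_cast hc
  have h1 : 0 < (1 - Complex.normSq a) := by
    have := Complex.sq_norm a; nlinarith [norm_nonneg a]
  have h2 : 0 < (1 - Complex.normSq z) := by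
    have := Complex.sq_norm z; nlinarith [norm_nonneg z]
  have hlt : Complex.normSq (z - a) < Complex.normSq (1 - (starRingEnd ℂ) a * z) := by
    nlinarith
  have habs : ‖z - a‖ < ‖1 - (starRingEnd ℂ) a * z‖ := by
    rw [← Complex.sq_norm, ← Complex.sq_norm] at hlt
    nlinarith [norm_nonneg (z - a), norm_nonneg (1 - (starRingEnd ℂ) a * z)]
  have hdpos : 0 < ‖1 - (starRingEnd ℂ) a * z‖ := by
    exact (norm_pos_iff.mpr hd)
  rw [mob, norm_div, norm_mul, hb, one_mul, div_lt_one hdpos]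
  exact habs

lemma L3 (a b z : ℂ) (ha : ‖a‖ < 1) (hb : ‖b‖ = 1)
    (hz : ‖z‖ < 1) :
    mob a b (mob (-(a*b)) ((starRingEnd ℂ) b) z) = z := by
  have hb1 : b * (starRingEnd ℂ) b = 1 := by
    rw [Complex.mul_conj]; norm_cast; rw [Complex.normSq_eq_norm_sq, hb]; norm_num
  have hd1 : (1 : ℂ) - (starRingEnd ℂ) (-(a*b)) * z ≠ 0 :=
    L1 (-(a*b)) z (by simpa [map_mul, hb] using ha) hz
  have hw : ‖mob (-(a*b)) ((starRingEnd ℂ) b) z‖ < 1 := by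
    apply L2
    · simpa [map_mul, hb] using ha
    · rwa [Complex.norm_conj]
    · exact hz
  have hd2 : (1 : ℂ) - (starRingEnd ℂ) a * (mob (-(a*b)) ((starRingEnd ℂ) b) z) ≠ 0 :=
    L1 a _ ha hw
  simp only [mob] at hd2 ⊢
  rw [div_eq_iff hd2]
  field_simp
  have hd : (1 : ℂ) + (starRingEnd ℂ) a * (starRingEnd ℂ) b * z ≠ 0 := by
    simpa [map_mul, sub_neg_eq_add, mul_comm, mul_assoc] using hd1
  simp only [map_neg, map_mul]
  have hd' : (1:ℂ) + (starRingEnd ℂ) b * z * (starRingEnd ℂ) a ≠ 0 := by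
    intro h; apply hd; linear_combination h
  field_simp [hd']
  linear_combination (z + a*b) * hb1

/-- The inverse of the Möbius map with parameters `(α, β)` has parameters
`(−αβ, β̄)`.  If `(α,β)` parametrizes `φ₁ φ₂`, then
`m₀(φ₁,φ₂) = c((φ₁φ₂)⁻¹, z)/(c(φ₂⁻¹, φ₁⁻¹ z) c(φ₁⁻¹, z))`
equals `s(β̄)/(s(β̄₁) s(β̄₂)) · (1 + α₁ ᾱ₂ β̄₂)/|1 + α₁ ᾱ₂ β̄₂|`. -/
theorem stmt14 (s : ℂ → ℂ) (hs : ∀ ζ : ℂ, ‖ζ‖ = 1 → (s ζ) ^ 2 = ζ)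
    (hs1 : s 1 = 1)
    (α₁ β₁ α₂ β₂ α β : ℂ)
    (hα₁ : ‖α₁‖ < 1) (hβ₁ : ‖β₁‖ = 1)
    (hα₂ : ‖α₂‖ < 1) (hβ₂ : ‖β₂‖ = 1)
    (hα : ‖α‖ < 1) (hβ : ‖β‖ = 1)
    (hcomp : ∀ z : ℂ, ‖z‖ < 1 → mob α β z = mob α₁ β₁ (mob α₂ β₂ z))
    (z : ℂ) (hz : ‖z‖ < 1) :
    cfun s (-(α * β)) ((starRingEnd ℂ) β) z /
        (cfun s (-(α₂ * β₂)) ((starRingEnd ℂ) β₂)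
            (mob (-(α₁ * β₁)) ((starRingEnd ℂ) β₁) z) *
          cfun s (-(α₁ * β₁)) ((starRingEnd ℂ) β₁) z) =
      s ((starRingEnd ℂ) β) / (s ((starRingEnd ℂ) β₁) * s ((starRingEnd ℂ) β₂)) *
        ((1 + α₁ * (starRingEnd ℂ) α₂ * (starRingEnd ℂ) β₂) /
          ((‖1 + α₁ * (starRingEnd ℂ) α₂ * (starRingEnd ℂ) β₂‖ : ℝ) : ℂ)) := by
  have hb1u : β₁ * (starRingEnd ℂ) β₁ = 1 := by
    rw [Complex.mul_conj]; norm_cast; rw [Complex.normSq_eq_norm_sq, hβ₁]; norm_num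
  have hb2u : β₂ * (starRingEnd ℂ) β₂ = 1 := by
    rw [Complex.mul_conj]; norm_cast; rw [Complex.normSq_eq_norm_sq, hβ₂]; norm_num
  set D : ℂ := 1 + α₁ * (starRingEnd ℂ) α₂ * (starRingEnd ℂ) β₂ with hD
  have hDne : D ≠ 0 := by
    intro h
    have h1 : α₁ * (starRingEnd ℂ) α₂ * (starRingEnd ℂ) β₂ = -1 := by
      rw [hD] at h; linear_combination h
    have h2 := congrArg (‖·‖) h1
    simp [map_mul, Complex.norm_conj, hβ₂] at h2
    nlinarith [norm_nonneg α₁, norm_nonneg α₂]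
  have hDcne : (starRingEnd ℂ) D ≠ 0 := by
    intro h; exact hDne (by simpa using congrArg (starRingEnd ℂ) h)
  -- K1
  set z₂ : ℂ := mob (-(α₂*β₂)) ((starRingEnd ℂ) β₂) α₁ with hz₂def
  have hz₂ : ‖z₂‖ < 1 := by
    apply L2
    · simpa [map_mul, hβ₂] using hα₂
    · rwa [Complex.norm_conj]
    · exact hα₁
  have hc2 := hcomp z₂ hz₂
  rw [show mob α₂ β₂ z₂ = α₁ from L3 α₂ β₂ α₁ hα₂ hβ₂ hα₁] at hc2
  rw [show mob α₁ β₁ α₁ = 0 by simp [mob]] at hc2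
  have hdz₂ : (1:ℂ) - (starRingEnd ℂ) α * z₂ ≠ 0 := L1 α z₂ hα hz₂
  have hβne : β ≠ 0 := by intro h; rw [h] at hβ; simp at hβ
  have hz₂α : z₂ = α := by
    rw [mob, div_eq_zero_iff] at hc2
    rcases hc2 with h | h
    · rcases mul_eq_zero.mp h with h | h
      · exact absurd h hβne
      · linear_combination h
    · exact absurd h hdz₂
  have K1 : α * D = α₁ * (starRingEnd ℂ) β₂ + α₂ := by
    have h1 : mob (-(α₂*β₂)) ((starRingEnd ℂ) β₂) α₁ = α := by rw [← hz₂def, hz₂α]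
    rw [mob] at h1
    have hd : (1:ℂ) - (starRingEnd ℂ) (-(α₂*β₂)) * α₁ ≠ 0 :=
      L1 _ _ (by simpa [map_mul, hβ₂] using hα₂) hα₁
    rw [div_eq_iff hd] at h1
    simp only [map_neg, map_mul] at h1
    simp only [hD]
    linear_combination -h1 + α₂ * hb2u
  have K1c : (starRingEnd ℂ) α * (starRingEnd ℂ) D
      = (starRingEnd ℂ) α₁ * β₂ + (starRingEnd ℂ) α₂ := by
    have := congrArg (starRingEnd ℂ) K1
    simpa [map_mul, map_add, Complex.conj_conj] using this
  -- K2
  have hc0 := hcomp 0 (by norm_num)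
  have K2 : α * β * (starRingEnd ℂ) D = β₁ * (α₁ + α₂ * β₂) := by
    simp only [mob, mul_zero, sub_zero, zero_sub, div_one] at hc0
    have hd : (1:ℂ) - (starRingEnd ℂ) α₁ * (β₂ * -α₂) ≠ 0 := by
      intro h; apply hDcne
      simp only [hD, map_add, map_mul, map_one, Complex.conj_conj]
      linear_combination h
    rw [eq_div_iff hd] at hc0
    simp only [hD, map_add, map_mul, map_one, Complex.conj_conj]
    linear_combination -hc0
  have K2c : (starRingEnd ℂ) α * (starRingEnd ℂ) β * D
      = (starRingEnd ℂ) β₁ * ((starRingEnd ℂ) α₁ + (starRingEnd ℂ) α₂ * (starRingEnd ℂ) β₂) := by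
    have := congrArg (starRingEnd ℂ) K2
    simpa [map_mul, map_add, Complex.conj_conj] using this
  -- complex norm identity
  have hCid : (1 - α * (starRingEnd ℂ) α) * (D * (starRingEnd ℂ) D)
      = (1 - α₁ * (starRingEnd ℂ) α₁) * (1 - α₂ * (starRingEnd ℂ) α₂) := by
    have K1e := K1
    have K1ce := K1c
    simp only [hD, map_add, map_mul, map_one, Complex.conj_conj] at K1e K1ce
    simp only [hD, map_add, map_mul, map_one, Complex.conj_conj]
    linear_combination (-((starRingEnd ℂ) α₁ * β₂ + (starRingEnd ℂ) α₂)) * K1e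
      + (-(α * (1 + α₁ * (starRingEnd ℂ) α₂ * (starRingEnd ℂ) β₂))) * K1ce
      + (α₁ * (starRingEnd ℂ) α₁ * α₂ * (starRingEnd ℂ) α₂ - α₁ * (starRingEnd ℂ) α₁) * hb2u
  have hRid : (1 - ‖α‖ ^ 2) * ‖D‖ ^ 2
      = (1 - ‖α₁‖ ^ 2) * (1 - ‖α₂‖ ^ 2) := by
    rw [Complex.mul_conj, Complex.mul_conj, Complex.mul_conj, Complex.mul_conj] at hCid
    have h2 : (1 - (Complex.normSq α : ℝ)) * Complex.normSq D
        = (1 - Complex.normSq α₁) * (1 - Complex.normSq α₂) := by exact_mod_cast hCid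
    simpa [← Complex.sq_norm] using h2
  have h1α : (0:ℝ) < 1 - ‖α‖ ^ 2 := by nlinarith [norm_nonneg α]
  have h1α₁ : (0:ℝ) < 1 - ‖α₁‖ ^ 2 := by nlinarith [norm_nonneg α₁]
  have h1α₂ : (0:ℝ) < 1 - ‖α₂‖ ^ 2 := by nlinarith [norm_nonneg α₂]
  have hrpos : (0:ℝ) < ‖D‖ := norm_pos_iff.mpr hDne
  have hA : Real.sqrt (1 - ‖α‖ ^ 2) * ‖D‖
      = Real.sqrt (1 - ‖α₁‖ ^ 2) * Real.sqrt (1 - ‖α₂‖ ^ 2) := by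
    conv_lhs => rw [show ‖D‖ = Real.sqrt (‖D‖ ^ 2) from (Real.sqrt_sq hrpos.le).symm]
    rw [← Real.sqrt_mul h1α.le, hRid, Real.sqrt_mul h1α₁.le]
  have hAC : ((Real.sqrt (1 - ‖α‖ ^ 2) : ℝ) : ℂ) * ((‖D‖ : ℝ) : ℂ)
      = ((Real.sqrt (1 - ‖α₁‖ ^ 2) : ℝ) : ℂ) * ((Real.sqrt (1 - ‖α₂‖ ^ 2) : ℝ) : ℂ) := by
    exact_mod_cast congrArg (fun t : ℝ => (t : ℂ)) hA
  have hsne : ∀ b : ℂ, ‖b‖ = 1 → s ((starRingEnd ℂ) b) ≠ 0 := by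
    intro b hb h
    have h2 := hs ((starRingEnd ℂ) b) (by rwa [Complex.norm_conj])
    rw [h] at h2
    have h3 : (starRingEnd ℂ) b = 0 := by simpa using h2.symm
    have h4 : b = 0 := by simpa using congrArg (starRingEnd ℂ) h3
    rw [h4] at hb; simp at hb
  have hs1ne := hsne β₁ hβ₁
  have hs2ne := hsne β₂ hβ₂
  have habsm : ‖-(α * β)‖ = ‖α‖ := by simp [hβ]
  have habsm1 : ‖-(α₁ * β₁)‖ = ‖α₁‖ := by simp [hβ₁]
  have habsm2 : ‖-(α₂ * β₂)‖ = ‖α₂‖ := by simp [hβ₂]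
  have hw : ‖mob (-(α₁ * β₁)) ((starRingEnd ℂ) β₁) z‖ < 1 :=
    L2 _ _ _ (by rwa [habsm1]) (by rwa [Complex.norm_conj]) hz
  have hd₁ : (1:ℂ) - (starRingEnd ℂ) (-(α₁ * β₁)) * z ≠ 0 := L1 _ _ (by rwa [habsm1]) hz
  have hd₂ : (1:ℂ) - (starRingEnd ℂ) (-(α * β)) * z ≠ 0 := L1 _ _ (by rwa [habsm]) hz
  have hdw : (1:ℂ) - (starRingEnd ℂ) (-(α₂ * β₂)) * mob (-(α₁ * β₁)) ((starRingEnd ℂ) β₁) z ≠ 0 :=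
    L1 _ _ (by rwa [habsm2]) hw
  have K2ce := K2c
  simp only [hD, map_add, map_mul, map_one, Complex.conj_conj] at K2ce
  have hprod : (1 - (starRingEnd ℂ) (-(α₂ * β₂)) * mob (-(α₁ * β₁)) ((starRingEnd ℂ) β₁) z)
        * (1 - (starRingEnd ℂ) (-(α₁ * β₁)) * z)
      = D * (1 - (starRingEnd ℂ) (-(α * β)) * z) := by
    have hX : (starRingEnd ℂ) (-(α₂ * β₂)) * mob (-(α₁ * β₁)) ((starRingEnd ℂ) β₁) z
          * (1 - (starRingEnd ℂ) (-(α₁ * β₁)) * z)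
        = (starRingEnd ℂ) (-(α₂ * β₂)) * ((starRingEnd ℂ) β₁ * (z - -(α₁ * β₁))) := by
      rw [mob, mul_assoc, div_mul_cancel₀ _ hd₁]
    rw [sub_mul, one_mul, hX]
    simp only [hD, map_neg, map_mul]
    linear_combination (-z) * K2ce + α₁ * (starRingEnd ℂ) α₂ * (starRingEnd ℂ) β₂ * hb1u
  have hAne : ((Real.sqrt (1 - ‖α‖ ^ 2) : ℝ) : ℂ) ≠ 0 := by
    exact_mod_cast (Real.sqrt_pos.mpr h1α).ne'
  have hA1ne : ((Real.sqrt (1 - ‖α₁‖ ^ 2) : ℝ) : ℂ) ≠ 0 := by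
    exact_mod_cast (Real.sqrt_pos.mpr h1α₁).ne'
  have hA2ne : ((Real.sqrt (1 - ‖α₂‖ ^ 2) : ℝ) : ℂ) ≠ 0 := by
    exact_mod_cast (Real.sqrt_pos.mpr h1α₂).ne'
  have hrne : ((‖D‖ : ℝ) : ℂ) ≠ 0 := by exact_mod_cast hrpos.ne'
  simp only [cfun, habsm, habsm1, habsm2]
  field_simp [hs1ne, hs2ne, hd₁, hd₂, hdw, hA1ne, hA2ne, hrne]
  have hd₂e : (1:ℂ) + (starRingEnd ℂ) α * (starRingEnd ℂ) β * z ≠ 0 := by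
    simpa [map_neg, map_mul, sub_neg_eq_add] using hd₂
  have hprode : (1 + (starRingEnd ℂ) α₂ * (starRingEnd ℂ) β₂ * mob (-(α₁ * β₁)) ((starRingEnd ℂ) β₁) z)
        * (1 + (starRingEnd ℂ) α₁ * (starRingEnd ℂ) β₁ * z)
      = D * (1 + (starRingEnd ℂ) α * (starRingEnd ℂ) β * z) := by
    simpa [map_neg, map_mul, sub_neg_eq_add] using hprod
  linear_combination s ((starRingEnd ℂ) β) *
    ((((Real.sqrt (1 - ‖α‖ ^ 2) : ℝ) : ℂ) * ((‖D‖ : ℝ) : ℂ)) * hprod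
      + (D * (1 - (starRingEnd ℂ) (-(α * β)) * z)) * hAC)
end

section
/- Let H be a reproducing kernel Hilbert space of ℂⁿ-valued functions on a set Ω that is the orthogonal direct sum of nontrivial subspaces H₀,…,H_{m−1} with reproducing kernels K₀,…,K_{m−1}. Let a₀,…,a_{m−1} be real numbers. Then ∑ⱼ aⱼKⱼ is a non-negative definite kernel if and only if aⱼ ≥ 0 for all j. -/
open ComplexOrder

set_option maxHeartbeats 1600000 in
/-- Lemma of Faraut–Korányi: a functional Hilbert space `H` (realized via an injective
linear map `J` into `ℂⁿ`-valued functions on `Ω`) is the orthogonal direct sum of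
nontrivial subspaces `H₀, …, H_{m−1}` with reproducing kernels `K₀, …, K_{m−1}`.
For real numbers `a₀, …, a_{m−1}`, the kernel `∑ⱼ aⱼ Kⱼ` is non-negative definite
iff all `aⱼ ≥ 0`. -/
theorem stmt16 {E Ω : Type*} [NormedAddCommGroup E] [InnerProductSpace ℂ E]
    [CompleteSpace E] (n m : ℕ) (hm : 0 < m)
    (J : E →ₗ[ℂ] (Ω → Fin n → ℂ)) (hJ : Function.Injective J)
    (Hs : Fin m → Submodule ℂ E)
    (horth : ∀ j j' : Fin m, j ≠ j' → ∀ f ∈ Hs j, ∀ g ∈ Hs j',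
      (inner ℂ f g : ℂ) = 0)
    (hspan : (⨆ j, Hs j) = ⊤)
    (hnontriv : ∀ j, Hs j ≠ ⊥)
    (K : Fin m → Ω → Ω → Matrix (Fin n) (Fin n) ℂ)
    (hrep : ∀ (j : Fin m) (w : Ω) (ξ : Fin n → ℂ), ∃ g : E, g ∈ Hs j ∧
      (∀ x : Ω, J g x = (K j x w).mulVec ξ) ∧
      ∀ f ∈ Hs j, (inner ℂ g f : ℂ) = ∑ i : Fin n, J f w i * (starRingEnd ℂ) (ξ i))
    (a : Fin m → ℝ) :
    (∀ (N : ℕ) (w : Fin N → Ω) (ξ : Fin N → Fin n → ℂ),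
        0 ≤ ∑ q : Fin N, ∑ p : Fin N, ∑ i : Fin n,
            (starRingEnd ℂ) (ξ q i) *
              ((∑ j : Fin m, (a j : ℂ) • K j (w q) (w p)).mulVec (ξ p) i)) ↔
      ∀ j, 0 ≤ a j := by
  classical
  choose g hgmem hgJ hginner using hrep
  have hnormsq : ∀ x : E, (inner ℂ x x : ℂ) = ((‖x‖ : ℝ) : ℂ) ^ 2 := fun x =>
    inner_self_eq_norm_sq_to_K x
  -- uniqueness helper
  have huniq : ∀ (j : Fin m) (u : E), u ∈ Hs j →
      (∀ f ∈ Hs j, (inner ℂ u f : ℂ) = 0) → u = 0 := by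
    intro j u hu h
    have := h u hu
    simpa [inner_self_eq_zero] using this
  -- the representer is linear in ξ
  have hsmul : ∀ (j : Fin m) (w : Ω) (c : ℂ) (ξ : Fin n → ℂ),
      g j w (c • ξ) = c • g j w ξ := by
    intro j w c ξ
    have hmem : g j w (c • ξ) - c • g j w ξ ∈ Hs j :=
      (Hs j).sub_mem (hgmem _ _ _) ((Hs j).smul_mem c (hgmem _ _ _))
    have h0 : g j w (c • ξ) - c • g j w ξ = 0 := by
      refine huniq j _ hmem fun f hf => ?_
      rw [inner_sub_left, inner_smul_left, hginner j w (c • ξ) f hf,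
        hginner j w ξ f hf, Finset.mul_sum]
      rw [sub_eq_zero]
      refine Finset.sum_congr rfl fun i _ => ?_
      simp [Pi.smul_apply, smul_eq_mul, map_mul]
      ring
    exact sub_eq_zero.mp h0
  -- inner products of representers
  have hgg : ∀ (j : Fin m) (w w' : Ω) (ξ ξ' : Fin n → ℂ),
      (inner ℂ (g j w ξ) (g j w' ξ') : ℂ)
        = ∑ i : Fin n, (K j w w').mulVec ξ' i * (starRingEnd ℂ) (ξ i) := by
    intro j w w' ξ ξ'
    rw [hginner j w ξ _ (hgmem j w' ξ')]
    refine Finset.sum_congr rfl fun i _ => ?_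
    rw [hgJ]
  -- the quadratic form identity
  have hQ : ∀ (N : ℕ) (w : Fin N → Ω) (ξ : Fin N → Fin n → ℂ),
      (∑ q : Fin N, ∑ p : Fin N, ∑ i : Fin n,
        (starRingEnd ℂ) (ξ q i) *
          ((∑ j : Fin m, (a j : ℂ) • K j (w q) (w p)).mulVec (ξ p) i))
      = ∑ j : Fin m, (a j : ℂ) *
          (inner ℂ (∑ p : Fin N, g j (w p) (ξ p)) (∑ p : Fin N, g j (w p) (ξ p)) : ℂ) := by
    intro N w ξ
    have hR : ∀ j : Fin m,
        (inner ℂ (∑ p : Fin N, g j (w p) (ξ p)) (∑ p : Fin N, g j (w p) (ξ p)) : ℂ)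
        = ∑ q : Fin N, ∑ p : Fin N, ∑ i : Fin n,
            (starRingEnd ℂ) (ξ q i) * ((K j (w q) (w p)).mulVec (ξ p) i) := by
      intro j
      rw [sum_inner]
      refine Finset.sum_congr rfl fun q _ => ?_
      rw [inner_sum]
      refine Finset.sum_congr rfl fun p _ => ?_
      rw [hgg]
      exact Finset.sum_congr rfl fun i _ => mul_comm _ _
    calc (∑ q : Fin N, ∑ p : Fin N, ∑ i : Fin n,
        (starRingEnd ℂ) (ξ q i) *
          ((∑ j : Fin m, (a j : ℂ) • K j (w q) (w p)).mulVec (ξ p) i))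
        = ∑ q : Fin N, ∑ p : Fin N, ∑ i : Fin n, ∑ j : Fin m,
            (a j : ℂ) * ((starRingEnd ℂ) (ξ q i) * ((K j (w q) (w p)).mulVec (ξ p) i)) := by
          refine Finset.sum_congr rfl fun q _ => Finset.sum_congr rfl fun p _ =>
            Finset.sum_congr rfl fun i _ => ?_
          have hx : (∑ j : Fin m, (a j : ℂ) • K j (w q) (w p)).mulVec (ξ p) i
              = ∑ j : Fin m, (a j : ℂ) * ((K j (w q) (w p)).mulVec (ξ p) i) := by
            simp only [Matrix.mulVec, dotProduct, Matrix.sum_apply, Matrix.smul_apply,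
              smul_eq_mul, Finset.sum_mul, Finset.mul_sum]
            rw [Finset.sum_comm]
            simp [mul_assoc]
          rw [hx, Finset.mul_sum]
          exact Finset.sum_congr rfl fun j _ => by ring
      _ = ∑ q : Fin N, ∑ p : Fin N, ∑ j : Fin m, ∑ i : Fin n,
            (a j : ℂ) * ((starRingEnd ℂ) (ξ q i) * ((K j (w q) (w p)).mulVec (ξ p) i)) := by
          refine Finset.sum_congr rfl fun q _ => Finset.sum_congr rfl fun p _ => ?_
          exact Finset.sum_comm
      _ = ∑ q : Fin N, ∑ j : Fin m, ∑ p : Fin N, ∑ i : Fin n,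
            (a j : ℂ) * ((starRingEnd ℂ) (ξ q i) * ((K j (w q) (w p)).mulVec (ξ p) i)) := by
          refine Finset.sum_congr rfl fun q _ => ?_
          exact Finset.sum_comm
      _ = ∑ j : Fin m, ∑ q : Fin N, ∑ p : Fin N, ∑ i : Fin n,
            (a j : ℂ) * ((starRingEnd ℂ) (ξ q i) * ((K j (w q) (w p)).mulVec (ξ p) i)) := by
          exact Finset.sum_comm
      _ = ∑ j : Fin m, (a j : ℂ) *
            (inner ℂ (∑ p : Fin N, g j (w p) (ξ p)) (∑ p : Fin N, g j (w p) (ξ p)) : ℂ) := by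
          refine Finset.sum_congr rfl fun j _ => ?_
          rw [hR j, Finset.mul_sum]
          refine Finset.sum_congr rfl fun q _ => ?_
          rw [Finset.mul_sum]
          refine Finset.sum_congr rfl fun p _ => ?_
          rw [Finset.mul_sum]
  constructor
  · -- main direction
    intro hpos
    by_contra hneg
    push_neg at hneg
    obtain ⟨j₀, hj₀⟩ := hneg
    -- a unit vector in Hs j₀
    obtain ⟨f₀, hf₀mem, hf₀⟩ := Submodule.ne_bot_iff (Hs j₀) |>.mp (hnontriv j₀)
    set f : E := ((‖f₀‖⁻¹ : ℝ) : ℂ) • f₀ with hfdef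
    have hfmem : f ∈ Hs j₀ := (Hs j₀).smul_mem _ hf₀mem
    have hfnorm : ‖f‖ = 1 := by
      rw [hfdef, norm_smul]
      simp [norm_ne_zero_iff.mpr hf₀]
    -- decomposition of any vector
    have hdecomp : ∀ u : E, ∃ v : Fin m → E, (∀ j, v j ∈ Hs j) ∧ u = ∑ j, v j := by
      intro u
      have hu : u ∈ ⨆ j, Hs j := hspan ▸ Submodule.mem_top
      rw [Submodule.mem_iSup_iff_exists_finsupp] at hu
      obtain ⟨c, hc, hsum⟩ := hu
      refine ⟨fun j => c j, hc, ?_⟩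
      rw [← hsum, Finsupp.sum_fintype]
      intro i; rfl
    -- the span of the representers is dense
    set S : Set E := Set.range (fun pq : Ω × (Fin n → ℂ) => ∑ j : Fin m, g j pq.1 pq.2)
      with hSdef
    have horthbot : (Submodule.span ℂ S)ᗮ = ⊥ := by
      rw [Submodule.eq_bot_iff]
      intro u hu
      rw [Submodule.mem_orthogonal] at hu
      obtain ⟨v, hv, huv⟩ := hdecomp u
      have key : ∀ (w : Ω) (ξ : Fin n → ℂ),
          ∑ i : Fin n, J u w i * (starRingEnd ℂ) (ξ i) = 0 := by
        intro w ξ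
        have h1 : (inner ℂ (∑ j : Fin m, g j w ξ) u : ℂ) = 0 :=
          hu _ (Submodule.subset_span ⟨(w, ξ), rfl⟩)
        rw [huv, inner_sum] at h1
        have h2 : ∀ j : Fin m, (inner ℂ (∑ j' : Fin m, g j' w ξ) (v j) : ℂ)
            = ∑ i : Fin n, J (v j) w i * (starRingEnd ℂ) (ξ i) := by
          intro j
          rw [sum_inner, Finset.sum_eq_single j]
          · exact hginner j w ξ (v j) (hv j)
          · intro j' _ hne
            exact horth j' j hne _ (hgmem _ _ _) _ (hv j)
          · intro h; exact absurd (Finset.mem_univ j) h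
        rw [huv, map_sum]
        simp only [Finset.sum_apply]
        calc ∑ i : Fin n, (∑ j : Fin m, J (v j) w i) * (starRingEnd ℂ) (ξ i)
            = ∑ j : Fin m, ∑ i : Fin n, J (v j) w i * (starRingEnd ℂ) (ξ i) := by
              rw [Finset.sum_comm]
              exact Finset.sum_congr rfl fun i _ => by rw [Finset.sum_mul]
          _ = 0 := by rw [← h1]; exact (Finset.sum_congr rfl fun j _ => (h2 j).symm)
      have hJu : J u = 0 := by
        funext w i
        have := key w (Pi.single i 1)
        simpa [Pi.single_apply, Finset.sum_ite_eq', mul_comm] using this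
      have : u = 0 := hJ (by rw [hJu, map_zero])
      simpa [this]
    have hdense : Dense ((Submodule.span ℂ S : Submodule ℂ E) : Set E) := by
      rw [Submodule.dense_iff_topologicalClosure_eq_top,
        Submodule.topologicalClosure_eq_top_iff]
      exact horthbot
    -- choose ε
    set A : ℝ := ∑ j : Fin m, |a j| with hAdef
    have hA : 0 ≤ A := Finset.sum_nonneg fun j _ => abs_nonneg _
    set ε : ℝ := min (1/2) ((-a j₀) / (4*A + 4)) with hεdef
    have hε0 : 0 < ε := lt_min (by norm_num) (div_pos (by linarith) (by linarith))
    have hεhalf : ε ≤ 1/2 := min_le_left _ _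
    have hεA : ε ≤ (-a j₀) / (4*A + 4) := min_le_right _ _
    -- approximate f
    obtain ⟨h, hhmem, hdist⟩ := hdense.exists_dist_lt f hε0
    have hhspan : h ∈ Submodule.span ℂ S := hhmem
    rw [Submodule.mem_span_set'] at hhspan
    obtain ⟨N, c, y, hyc⟩ := hhspan
    choose pq hpq using fun k => (y k).2
    set w : Fin N → Ω := fun k => (pq k).1 with hwdef
    set ξ : Fin N → Fin n → ℂ := fun k => c k • (pq k).2 with hξdef
    set hcomp : Fin m → E := fun j => ∑ k : Fin N, g j (w k) (ξ k) with hcompdef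
    have hcompmem : ∀ j, hcomp j ∈ Hs j := fun j =>
      Submodule.sum_mem _ fun k _ => hgmem _ _ _
    have hh : h = ∑ j : Fin m, hcomp j := by
      rw [← hyc]
      rw [Finset.sum_comm]
      refine Finset.sum_congr rfl fun k _ => ?_
      rw [← hpq k]
      rw [Finset.smul_sum]
      exact Finset.sum_congr rfl fun j _ => (hsmul j (w k) (c k) (pq k).2).symm
    -- the positivity hypothesis applied to this family
    have hposreal : 0 ≤ ∑ j : Fin m, a j * ‖hcomp j‖ ^ 2 := by
      have := hpos N w ξ
      rw [hQ] at this
      simp only [hnormsq] at this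
      have hcast : (∑ j : Fin m, (a j : ℂ) * ((‖hcomp j‖ : ℝ) : ℂ) ^ 2)
          = ((∑ j : Fin m, a j * ‖hcomp j‖ ^ 2 : ℝ) : ℂ) := by
        push_cast; rfl
      rw [hcast] at this
      exact_mod_cast this
    -- norm estimates for components
    set d : Fin m → E := fun j => hcomp j - (if j = j₀ then f else 0) with hddef
    have hdmem : ∀ j, d j ∈ Hs j := by
      intro j
      refine (Hs j).sub_mem (hcompmem j) ?_
      by_cases hj : j = j₀
      · subst hj; simpa using hfmem
      · simp [hj]
    have hdiff : h - f = ∑ j : Fin m, d j := by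
      rw [hh, hddef]
      rw [Finset.sum_sub_distrib]
      congr 1
      rw [Finset.sum_ite_eq' Finset.univ j₀ (fun _ => f)]
      simp
    have hdj : ∀ j, ‖d j‖ ≤ ‖h - f‖ := by
      intro j
      have h1 : (inner ℂ (d j) (h - f) : ℂ) = (‖d j‖ : ℂ) ^ 2 := by
        rw [hdiff, inner_sum, Finset.sum_eq_single j]
        · exact inner_self_eq_norm_sq_to_K _
        · intro j' _ hne
          exact horth j j' (Ne.symm hne) _ (hdmem j) _ (hdmem j')
        · intro hmem; exact absurd (Finset.mem_univ j) hmem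
      have h2 := norm_inner_le_norm (𝕜 := ℂ) (d j) (h - f)
      rw [h1] at h2
      have h3 : ‖((‖d j‖ : ℂ)) ^ 2‖ = ‖d j‖ ^ 2 := by
        rw [norm_pow, Complex.norm_real, norm_norm]
      rw [h3] at h2
      nlinarith [norm_nonneg (d j), norm_nonneg (h - f)]
    have hdistnorm : ‖h - f‖ < ε := by
      rw [← dist_eq_norm]
      rw [dist_comm]
      exact hdist
    have hsmall : ∀ j, j ≠ j₀ → ‖hcomp j‖ < ε := by
      intro j hj
      have := hdj j
      rw [hddef] at this
      simp only [hj, if_false, sub_zero] at this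
      exact lt_of_le_of_lt this hdistnorm
    have hbig : 1 - ε ≤ ‖hcomp j₀‖ := by
      have h1 := hdj j₀
      simp only [hddef, if_pos rfl] at h1
      have h2 : ‖hcomp j₀ - f‖ < ε := lt_of_le_of_lt h1 hdistnorm
      have h3 : ‖f‖ - ‖hcomp j₀‖ ≤ ‖f - hcomp j₀‖ := norm_sub_norm_le f (hcomp j₀)
      rw [norm_sub_rev] at h3
      rw [hfnorm] at h3
      linarith
    -- final contradiction
    have hterm : ∀ j ∈ Finset.univ.erase j₀, a j * ‖hcomp j‖ ^ 2 ≤ |a j| * ε ^ 2 := by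
      intro j hj
      have hjne : j ≠ j₀ := (Finset.mem_erase.mp hj).1
      have h5 : ‖hcomp j‖ ^ 2 ≤ ε ^ 2 := by
        have := hsmall j hjne
        nlinarith [norm_nonneg (hcomp j)]
      calc a j * ‖hcomp j‖ ^ 2 ≤ |a j| * ‖hcomp j‖ ^ 2 :=
            mul_le_mul_of_nonneg_right (le_abs_self _) (sq_nonneg _)
        _ ≤ |a j| * ε ^ 2 := mul_le_mul_of_nonneg_left h5 (abs_nonneg _)
    have hsum_erase : ∑ j ∈ Finset.univ.erase j₀, a j * ‖hcomp j‖ ^ 2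
        ≤ A * ε ^ 2 := by
      calc ∑ j ∈ Finset.univ.erase j₀, a j * ‖hcomp j‖ ^ 2
          ≤ ∑ j ∈ Finset.univ.erase j₀, |a j| * ε ^ 2 := Finset.sum_le_sum hterm
        _ ≤ ∑ j : Fin m, |a j| * ε ^ 2 := by
            refine Finset.sum_le_sum_of_subset_of_nonneg (Finset.erase_subset _ _) ?_
            intro j _ _
            positivity
        _ = A * ε ^ 2 := by rw [hAdef, Finset.sum_mul]
    have hmain : ∑ j : Fin m, a j * ‖hcomp j‖ ^ 2 < 0 := by
      rw [← Finset.add_sum_erase Finset.univ _ (Finset.mem_univ j₀)]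
      have h7 : (1 - ε) ^ 2 ≤ ‖hcomp j₀‖ ^ 2 := by
        nlinarith [hbig, hε0, hεhalf, norm_nonneg (hcomp j₀)]
      have h6 : a j₀ * ‖hcomp j₀‖ ^ 2 ≤ a j₀ * (1 - ε) ^ 2 :=
        mul_le_mul_of_nonpos_left h7 (le_of_lt hj₀)
      have h8 : A * ε ^ 2 ≤ A * ε := by
        nlinarith [mul_nonneg (mul_nonneg hA hε0.le) (show (0:ℝ) ≤ 1 - ε by linarith)]
      have h9 : A * ε ≤ A * ((-a j₀) / (4*A + 4)) :=
        mul_le_mul_of_nonneg_left hεA hA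
      have h10 : A * ((-a j₀) / (4*A + 4)) < (-a j₀) / 4 := by
        rw [mul_div_assoc']
        rw [div_lt_div_iff₀ (by linarith) (by norm_num : (0:ℝ) < 4)]
        nlinarith [hA, hj₀]
      have h12 : (1/2 : ℝ) ≤ 1 - ε := by linarith
      have h13 : (1/4 : ℝ) ≤ (1 - ε) ^ 2 := by nlinarith [h12]
      have h11 : a j₀ * (1 - ε) ^ 2 ≤ a j₀ * (1/4) :=
        mul_le_mul_of_nonpos_left h13 (le_of_lt hj₀)
      linarith [hsum_erase]
    linarith [hposreal, hmain]
  · -- easy direction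
    intro ha N w ξ
    rw [hQ]
    refine Finset.sum_nonneg fun j _ => ?_
    have h1 : (0 : ℂ) ≤ (a j : ℂ) := by
      rw [Complex.zero_le_real]; exact ha j
    have h2 : (0 : ℂ) ≤
        (inner ℂ (∑ p : Fin N, g j (w p) (ξ p)) (∑ p : Fin N, g j (w p) (ξ p)) : ℂ) := by
      rw [hnormsq, show (((‖∑ p : Fin N, g j (w p) (ξ p)‖ : ℝ)) : ℂ) ^ 2
        = ((‖∑ p : Fin N, g j (w p) (ξ p)‖ ^ 2 : ℝ) : ℂ) by push_cast; ring]
      rw [Complex.zero_le_real]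
      positivity
    exact mul_nonneg h1 h2
end

section
/- Let λ > 1 be real. For each integer p ≥ 0 and 0 ≤ j ≤ p, define the homogeneous polynomial h_{j,p}(z,w) = ∑_{i=j}^{p} C(i,j)·C(p−i+λ−1, p−i)·z^i w^{p−i} (where C(p−i+λ−1,p−i) = (λ)_{p−i}/(p−i)! is a generalized binomial coefficient). For 0 ≤ k ≤ p+1, the set {h_{j,p} : 0 ≤ j < k} is linearly independent, and its span equals the space of homogeneous polynomials of degree p in (z,w) that are orthogonal (in the weighted inner product where ⟨z^i w^{p−i}, z^i w^{p−i}⟩ = 1/C(p−i+λ−1,p−i)) to all homogeneous degree-p polynomials ∑ aᵢ z^i w^{p−i} whose coefficient vector a lies in the kernel of the adjoint of the (p+1)×k matrix (C(i,j))_{0≤i≤p, 0≤j<k}. -/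
/-- The generalized binomial coefficient `C(p−i+λ−1, p−i) = (λ)_{p−i}/(p−i)!`. -/
noncomputable def binc (lam : ℝ) (p i : ℕ) : ℝ :=
  poch lam (p - i) / (Nat.factorial (p - i) : ℝ)

/-- The coefficient vector of the homogeneous polynomial
`h_{j,p}(z,w) = ∑_{i=j}^p C(i,j) C(p−i+λ−1,p−i) zⁱ w^{p−i}`
in the monomial basis `zⁱ w^{p−i}`, `0 ≤ i ≤ p`.  (Note `C(i,j) = 0` for `i < j`.) -/
noncomputable def hvec (lam : ℝ) (p k : ℕ) (j : Fin k) : Fin (p + 1) → ℂ :=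
  fun i => ((i : ℕ).choose (j : ℕ) : ℂ) * ((binc lam p (i : ℕ) : ℝ) : ℂ)

/-- The `(p+1) × k` matrix `D = (C(i,j))`. -/
def Dmat (p k : ℕ) : Matrix (Fin (p + 1)) (Fin k) ℂ :=
  Matrix.of fun i j => ((i : ℕ).choose (j : ℕ) : ℂ)

/-- For `0 ≤ k ≤ p+1`, the vectors `h_{j,p}`, `0 ≤ j < k`, are linearly independent,
and their span equals the set of (coefficient vectors of) homogeneous degree-`p`
polynomials orthogonal, in the weighted inner product with
`‖zⁱ w^{p−i}‖² = 1/C(p−i+λ−1,p−i)`, to all polynomials whose coefficient vector lies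
in the kernel of `D*`. -/
theorem stmt17 (lam : ℝ) (hlam : 1 < lam) (p k : ℕ) (hk : k ≤ p + 1) :
    LinearIndependent ℂ (hvec lam p k) ∧
      (Submodule.span ℂ (Set.range (hvec lam p k)) : Set (Fin (p + 1) → ℂ)) =
        {b | ∀ a : Fin (p + 1) → ℂ,
          (Dmat p k).conjTranspose.mulVec a = 0 →
            ∑ i : Fin (p + 1),
              (starRingEnd ℂ) (a i) * b i / ((binc lam p (i : ℕ) : ℝ) : ℂ) = 0} := by
  have hlam0 : (0 : ℝ) < lam := lt_trans zero_lt_one hlam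
  have hbpos : ∀ i : ℕ, 0 < binc lam p i := by
    intro i
    apply div_pos
    · exact Finset.prod_pos fun j _ => add_pos_of_pos_of_nonneg hlam0 (Nat.cast_nonneg _)
    · exact_mod_cast Nat.factorial_pos _
  have hbC : ∀ i : ℕ, ((binc lam p i : ℝ) : ℂ) ≠ 0 := fun i => by
    exact_mod_cast (hbpos i).ne'
  constructor
  · -- linear independence
    rw [Fintype.linearIndependent_iff]
    intro g hg
    have hrow : ∀ i : Fin (p + 1), ∑ j : Fin k, g j * ((i : ℕ).choose (j : ℕ) : ℂ) = 0 := by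
      intro i
      have h1 := congrFun hg i
      simp only [Finset.sum_apply, Pi.smul_apply, hvec, smul_eq_mul, Pi.zero_apply] at h1
      have h2 : (∑ j : Fin k, g j * ((i : ℕ).choose (j : ℕ) : ℂ)) *
          ((binc lam p (i : ℕ) : ℝ) : ℂ) = 0 := by
        rw [Finset.sum_mul, ← h1]
        exact Finset.sum_congr rfl fun j _ => by ring
      rcases mul_eq_zero.mp h2 with h | h
      · exact h
      · exact absurd h (hbC _)
    have key : ∀ n : ℕ, ∀ j : Fin k, (j : ℕ) = n → g j = 0 := by
      intro n
      induction n using Nat.strong_induction_on with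
      | _ n ih =>
        intro j hj
        have hi : (j : ℕ) < p + 1 := lt_of_lt_of_le j.2 hk
        have h := hrow ⟨(j : ℕ), hi⟩
        rw [Finset.sum_eq_single j] at h
        · simpa using h
        · intro j' _ hne
          rcases lt_or_gt_of_ne (fun hh : (j' : ℕ) = (j : ℕ) => hne (Fin.ext hh)) with hlt | hgt
          · rw [ih (j' : ℕ) (hj ▸ hlt) j' rfl, zero_mul]
          · simp [Nat.choose_eq_zero_of_lt hgt]
        · intro hmem; exact absurd (Finset.mem_univ j) hmem
    exact fun j => key (j : ℕ) j rfl
  · ext b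
    simp only [SetLike.mem_coe, Set.mem_setOf_eq]
    constructor
    · -- span ⊆ orthogonality condition
      intro hb a ha
      let φ : (Fin (p + 1) → ℂ) →ₗ[ℂ] ℂ :=
        { toFun := fun v => ∑ i, (starRingEnd ℂ) (a i) * v i / ((binc lam p (i : ℕ) : ℝ) : ℂ)
          map_add' := by
            intro x y
            simp only [Pi.add_apply, mul_add, add_div, Finset.sum_add_distrib]
          map_smul' := by
            intro m x
            simp only [Pi.smul_apply, smul_eq_mul, RingHom.id_apply, Finset.mul_sum]
            exact Finset.sum_congr rfl fun i _ => by ring }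
      have hgen : ∀ j : Fin k, φ (hvec lam p k j) = 0 := by
        intro j
        have haj := congrFun ha j
        simp only [Matrix.mulVec, dotProduct, Matrix.conjTranspose_apply, Dmat,
          Matrix.of_apply, Pi.zero_apply, star_natCast] at haj
        have : φ (hvec lam p k j) = ∑ i : Fin (p + 1),
            (starRingEnd ℂ) (a i) * ((i : ℕ).choose (j : ℕ) : ℂ) := by
          simp only [φ, LinearMap.coe_mk, AddHom.coe_mk]
          apply Finset.sum_congr rfl
          intro i _
          show (starRingEnd ℂ) (a i) * hvec lam p k j i / _ = _
          rw [hvec]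
          field_simp [hbC (i : ℕ)]
        rw [this]
        calc ∑ i : Fin (p + 1), (starRingEnd ℂ) (a i) * ((i : ℕ).choose (j : ℕ) : ℂ)
            = (starRingEnd ℂ) (∑ i : Fin (p + 1), a i * ((i : ℕ).choose (j : ℕ) : ℂ)) := by
              rw [map_sum]
              exact Finset.sum_congr rfl fun i _ => by
                rw [map_mul, map_natCast]
          _ = 0 := by
              rw [show (∑ i : Fin (p + 1), a i * ((i : ℕ).choose (j : ℕ) : ℂ)) = 0 from by
                rw [← haj]; exact Finset.sum_congr rfl fun i _ => mul_comm _ _]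
              exact map_zero _
      have hle : Submodule.span ℂ (Set.range (hvec lam p k)) ≤ LinearMap.ker φ :=
        Submodule.span_le.mpr (by rintro _ ⟨j, rfl⟩; exact hgen j)
      exact hle hb
    · -- orthogonality condition ⊆ span
      intro hb
      set B : Fin (p + 1) → ℂ := fun i => ((binc lam p (i : ℕ) : ℝ) : ℂ) with hB
      let e := WithLp.linearEquiv 2 ℂ (Fin (p + 1) → ℂ)
      let col : Fin k → (Fin (p + 1) → ℂ) := fun j i => ((i : ℕ).choose (j : ℕ) : ℂ)
      let T : Submodule ℂ (EuclideanSpace ℂ (Fin (p + 1))) :=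
        Submodule.span ℂ (Set.range fun j => e.symm (col j))
      let c : Fin (p + 1) → ℂ := fun i => b i / B i
      have hc' : e.symm c ∈ Tᗮᗮ := by
        rw [Submodule.mem_orthogonal]
        intro u hu
        have hDu : (Dmat p k).conjTranspose.mulVec (e u) = 0 := by
          funext j
          have huj : inner ℂ (e.symm (col j)) u = (0 : ℂ) :=
            hu (e.symm (col j)) (Submodule.subset_span ⟨j, rfl⟩)
          rw [PiLp.inner_apply] at huj
          simp only [RCLike.inner_apply] at huj
          simp only [Matrix.mulVec, dotProduct, Matrix.conjTranspose_apply, Dmat,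
            Matrix.of_apply, Pi.zero_apply, star_natCast]
          rw [← huj]
          exact Finset.sum_congr rfl fun i _ => by
            simp [col, e, WithLp.linearEquiv, map_natCast, mul_comm]
        have := hb (e u) hDu
        rw [PiLp.inner_apply]
        simp only [RCLike.inner_apply]
        rw [← this]
        exact Finset.sum_congr rfl fun i _ => by
          simp only [c, e, WithLp.linearEquiv]
          rw [mul_div_assoc, mul_comm]
          rfl
      rw [Submodule.orthogonal_orthogonal] at hc'
      obtain ⟨x, hx⟩ := (Submodule.mem_span_range_iff_exists_fun ℂ).mp hc'
      have hx' : ∀ i, (∑ j, x j * col j i) = c i := by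
        intro i
        have h1 := congrArg (fun v => e v i) hx
        simp only [map_sum, map_smul, LinearEquiv.apply_symm_apply] at h1
        simpa [Finset.sum_apply, Pi.smul_apply, smul_eq_mul] using h1
      have hbeq : b = ∑ j, x j • hvec lam p k j := by
        funext i
        have h1 := hx' i
        have h2 : b i = c i * B i := by
          simp only [c]
          field_simp [hbC (i : ℕ)]
          exact (mul_div_cancel_right₀ _ (hbC (i : ℕ))).symm
        rw [h2, ← h1, Finset.sum_mul]
        simp only [Finset.sum_apply, Pi.smul_apply, smul_eq_mul, hvec]
        exact Finset.sum_congr rfl fun j _ => by simp only [col]; ring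
      rw [hbeq]
      exact Submodule.sum_mem _ fun j _ =>
        Submodule.smul_mem _ _ (Submodule.subset_span ⟨j, rfl⟩)
end
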